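/- Let B : [0,1] → (symmetric bilinear forms on ℝ^g) be a continuous map such that B(t) is positive definite for every t ∈ [0,1]. Suppose σ ⊆ ℝ^g is a g-dimensional Delaunay cell of B(t) for every t ∈ (0,1]. Then there exists a Delaunay cell σ′ of B(0) with σ ⊆ σ′. -/

import Mathlib

open Matrix Set

noncomputable section

/-- The standard lattice `ℤ^g` sitting inside `ℝ^g`. -/
def latticePts (g : ℕ) : Set (Fin g → ℝ) :=
  Set.range (fun a : Fin g → ℤ => fun i => (a i : ℝ))

/-- `σ` is a (closed) Delaunay cell of the bilinear form `B`: there is an `α ∈ ℝ^g`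
such that `σ` is the convex hull of the lattice points nearest to `α`
(with respect to the distance defined by `B`). -/
def IsDelaunayCell {g : ℕ} (B : (Fin g → ℝ) → (Fin g → ℝ) → ℝ)
    (σ : Set (Fin g → ℝ)) : Prop :=
  ∃ α : Fin g → ℝ, σ = convexHull ℝ
    {a | a ∈ latticePts g ∧ ∀ b ∈ latticePts g, B (a - α) (a - α) ≤ B (b - α) (b - α)}

/-- `C(0,S)`: the cone generated by `S` over the nonnegative reals. -/
def cone0 {g : ℕ} (S : Set (Fin g → ℝ)) : Set (Fin g → ℝ) :=
  {x | ∃ r : ℝ, 0 ≤ r ∧ ∃ y ∈ convexHull ℝ S, x = r • y}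

/-- `Semi(0, S ∩ ℤ^g)`: the additive submonoid generated by the lattice points of `S`. -/
def semi0 {g : ℕ} (S : Set (Fin g → ℝ)) : Set (Fin g → ℝ) :=
  (AddSubmonoid.closure (S ∩ latticePts g) : AddSubmonoid (Fin g → ℝ))

namespace DelaunayAux

variable {g : ℕ}

lemma symm_dot {A : Matrix (Fin g) (Fin g) ℝ} (hA : Aᵀ = A) (x y : Fin g → ℝ) :
    x ⬝ᵥ A *ᵥ y = y ⬝ᵥ A *ᵥ x := by
  calc x ⬝ᵥ A *ᵥ y = (x ᵥ* A) ⬝ᵥ y := dotProduct_mulVec x A y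
    _ = y ⬝ᵥ (x ᵥ* A) := dotProduct_comm _ _
    _ = y ⬝ᵥ (x ᵥ* Aᵀᵀ) := by rw [transpose_transpose]
    _ = y ⬝ᵥ (Aᵀ *ᵥ x) := by rw [vecMul_transpose]
    _ = y ⬝ᵥ (A *ᵥ x) := by rw [hA]

lemma sub_quad_eq {A : Matrix (Fin g) (Fin g) ℝ} (hA : Aᵀ = A) (x α : Fin g → ℝ) :
    (x - α) ⬝ᵥ A *ᵥ (x - α)
      = x ⬝ᵥ A *ᵥ x - 2 * (x ⬝ᵥ A *ᵥ α) + α ⬝ᵥ A *ᵥ α := by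
  simp only [mulVec_sub, dotProduct_sub, sub_dotProduct]
  rw [symm_dot hA α x]
  ring

lemma convexOn_quad {A : Matrix (Fin g) (Fin g) ℝ} (hA : Aᵀ = A)
    (hpsd : ∀ x, 0 ≤ x ⬝ᵥ A *ᵥ x) (α : Fin g → ℝ) :
    ConvexOn ℝ Set.univ (fun x => (x - α) ⬝ᵥ A *ᵥ (x - α)) := by
  refine ⟨convex_univ, fun x _ y _ a b ha hb hab => ?_⟩
  have h1 : a • α + b • α = α := by rw [← add_smul, hab, one_smul]
  have hrw : a • x + b • y - α = a • (x - α) + b • (y - α) := by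
    calc a • x + b • y - α = a • x + b • y - (a • α + b • α) := by rw [h1]
      _ = a • (x - α) + b • (y - α) := by rw [smul_sub, smul_sub]; abel
  show (a • x + b • y - α) ⬝ᵥ A *ᵥ (a • x + b • y - α)
      ≤ a • ((x - α) ⬝ᵥ A *ᵥ (x - α)) + b • ((y - α) ⬝ᵥ A *ᵥ (y - α))
  rw [hrw]
  have e1 : (a • (x - α) + b • (y - α)) ⬝ᵥ A *ᵥ (a • (x - α) + b • (y - α))
      = a * a * ((x - α) ⬝ᵥ A *ᵥ (x - α)) + a * b * ((x - α) ⬝ᵥ A *ᵥ (y - α))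
        + a * b * ((y - α) ⬝ᵥ A *ᵥ (x - α)) + b * b * ((y - α) ⬝ᵥ A *ᵥ (y - α)) := by
    simp only [mulVec_add, mulVec_smul, dotProduct_add, add_dotProduct,
      dotProduct_smul, smul_dotProduct, smul_eq_mul]
    ring
  have hsym : (y - α) ⬝ᵥ A *ᵥ (x - α) = (x - α) ⬝ᵥ A *ᵥ (y - α) := symm_dot hA _ _
  have hnn : 0 ≤ ((x - α) - (y - α)) ⬝ᵥ A *ᵥ ((x - α) - (y - α)) := hpsd _
  have e2 : ((x - α) - (y - α)) ⬝ᵥ A *ᵥ ((x - α) - (y - α))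
      = (x - α) ⬝ᵥ A *ᵥ (x - α) - ((x - α) ⬝ᵥ A *ᵥ (y - α))
        - ((y - α) ⬝ᵥ A *ᵥ (x - α)) + (y - α) ⬝ᵥ A *ᵥ (y - α) := by
    simp only [mulVec_sub, dotProduct_sub, sub_dotProduct]
    ring
  rw [e2] at hnn
  rw [e1, smul_eq_mul, smul_eq_mul]
  set p := (x - α) ⬝ᵥ A *ᵥ (x - α) with hp
  set q := (x - α) ⬝ᵥ A *ᵥ (y - α) with hq
  set r := (y - α) ⬝ᵥ A *ᵥ (x - α) with hr
  set s := (y - α) ⬝ᵥ A *ᵥ (y - α) with hs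
  have hb' : b = 1 - a := by linarith
  subst hb'
  have hfact : a * p + (1 - a) * s - (a * a * p + a * (1 - a) * q + a * (1 - a) * r
      + (1 - a) * (1 - a) * s) = a * (1 - a) * (p - q - r + s) := by ring
  have hprod : 0 ≤ a * (1 - a) * (p - q - r + s) :=
    mul_nonneg (mul_nonneg ha hb) hnn
  linarith

end DelaunayAux

open DelaunayAux

set_option maxHeartbeats 1000000 in
/-- If `σ` is a `g`-dimensional Delaunay cell of `B(t)` for all `t ∈ (0,1]`,
where `B : [0,1] → Y_g` is continuous with positive definite values, then `σ` is
contained in some Delaunay cell of `B(0)`. -/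
theorem delaunay_cell_subset_limit_cell
    (g : ℕ) (B : ℝ → Matrix (Fin g) (Fin g) ℝ)
    (hcont : ContinuousOn B (Set.Icc 0 1))
    (hpos : ∀ t ∈ Set.Icc (0 : ℝ) 1, (B t).PosDef)
    (σ : Set (Fin g → ℝ))
    (hσ : ∀ t ∈ Set.Ioc (0 : ℝ) 1,
      IsDelaunayCell (fun x y => x ⬝ᵥ (B t).mulVec y) σ)
    (hdim : affineSpan ℝ σ = ⊤) :
    ∃ σ' : Set (Fin g → ℝ),
      IsDelaunayCell (fun x y => x ⬝ᵥ (B 0).mulVec y) σ' ∧ σ ⊆ σ' := by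
  classical
  choose α hα using hσ
  have hsymm : ∀ t ∈ Set.Icc (0:ℝ) 1, (B t)ᵀ = B t := by
    intro t ht
    have h := (hpos t ht).isHermitian
    simpa [Matrix.IsHermitian, Matrix.conjTranspose_eq_transpose_of_trivial] using h
  have hpsd : ∀ t ∈ Set.Icc (0:ℝ) 1, ∀ x, 0 ≤ x ⬝ᵥ B t *ᵥ x := by
    intro t ht x
    simpa using (hpos t ht).posSemidef.dotProduct_mulVec_nonneg x
  -- the nearest-point set at time t
  have hαN : ∀ t (ht : t ∈ Set.Ioc (0:ℝ) 1), σ = convexHull ℝ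
      {a | a ∈ latticePts g ∧ ∀ b ∈ latticePts g,
        (a - α t ht) ⬝ᵥ B t *ᵥ (a - α t ht) ≤ (b - α t ht) ⬝ᵥ B t *ᵥ (b - α t ht)} :=
    fun t ht => hα t ht
  -- V = σ ∩ lattice points
  have hNV : ∀ t (ht : t ∈ Set.Ioc (0:ℝ) 1), ∀ a,
      (a ∈ latticePts g ∧ ∀ b ∈ latticePts g,
        (a - α t ht) ⬝ᵥ B t *ᵥ (a - α t ht) ≤ (b - α t ht) ⬝ᵥ B t *ᵥ (b - α t ht)) →
      a ∈ σ ∧ a ∈ latticePts g := by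
    intro t ht a ha
    exact ⟨(hαN t ht) ▸ subset_convexHull ℝ _ ha, ha.1⟩
  have hVN : ∀ t (ht : t ∈ Set.Ioc (0:ℝ) 1), ∀ a, a ∈ σ → a ∈ latticePts g →
      a ∈ latticePts g ∧ ∀ b ∈ latticePts g,
        (a - α t ht) ⬝ᵥ B t *ᵥ (a - α t ht) ≤ (b - α t ht) ⬝ᵥ B t *ᵥ (b - α t ht) := by
    intro t ht a haσ halat
    have htI : t ∈ Set.Icc (0:ℝ) 1 := Set.Ioc_subset_Icc_self ht
    refine ⟨halat, fun b hb => ?_⟩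
    have hconv := convexOn_quad (hsymm t htI) (hpsd t htI) (α t ht)
    have hmem : a ∈ convexHull ℝ
        {a | a ∈ latticePts g ∧ ∀ b ∈ latticePts g,
          (a - α t ht) ⬝ᵥ B t *ᵥ (a - α t ht) ≤ (b - α t ht) ⬝ᵥ B t *ᵥ (b - α t ht)} :=
      (hαN t ht) ▸ haσ
    obtain ⟨y, hyN, hay⟩ := hconv.exists_ge_of_mem_convexHull (Set.subset_univ _) hmem
    exact hay.trans (hyN.2 b hb)
  have h1mem : (1:ℝ) ∈ Set.Ioc (0:ℝ) 1 := ⟨one_pos, le_refl 1⟩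
  set N₁ : Set (Fin g → ℝ) :=
    {a | a ∈ latticePts g ∧ ∀ b ∈ latticePts g,
      (a - α 1 h1mem) ⬝ᵥ B 1 *ᵥ (a - α 1 h1mem) ≤ (b - α 1 h1mem) ⬝ᵥ B 1 *ᵥ (b - α 1 h1mem)}
    with hN₁
  have hσ1 : σ = convexHull ℝ N₁ := hαN 1 h1mem
  have hNV1 : ∀ a ∈ N₁, a ∈ σ ∧ a ∈ latticePts g := fun a ha => hNV 1 h1mem a ha
  -- N₁ spans
  have haff1 : affineSpan ℝ N₁ = ⊤ := by
    rw [← affineSpan_convexHull, ← hσ1, hdim]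
  have hvs : vectorSpan ℝ N₁ = ⊤ :=
    AffineSubspace.vectorSpan_eq_top_of_affineSpan_eq_top ℝ _ _ haff1
  have hspan : Submodule.span ℝ (N₁ -ᵥ N₁) = ⊤ := by
    rw [← vectorSpan_def]; exact hvs
  obtain ⟨bS, hbS, hbspan, hbli⟩ := exists_linearIndependent ℝ (N₁ -ᵥ N₁)
  rw [hspan] at hbspan
  obtain ⟨d, hd_mem, hdli⟩ : ∃ d : Fin g → (Fin g → ℝ),
      (∀ i, d i ∈ N₁ -ᵥ N₁) ∧ LinearIndependent ℝ d := by
    let bas : Module.Basis bS ℝ (Fin g → ℝ) :=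
      Module.Basis.mk hbli (by rw [Subtype.range_coe, hbspan])
    haveI : Fintype bS := IsNoetherian.fintypeBasisIndex bas
    have hcard : Fintype.card bS = g := by
      have h1 := Module.finrank_eq_card_basis bas
      have h2 : Module.finrank ℝ (Fin g → ℝ) = g := Module.finrank_fin_fun ℝ
      omega
    let e : bS ≃ Fin g := Fintype.equivFinOfCardEq hcard
    exact ⟨fun i => ((e.symm i : bS) : Fin g → ℝ), fun i => hbS (e.symm i).2,
      hbli.comp e.symm e.symm.injective⟩
  have hexists : ∀ i, ∃ u ∈ N₁, ∃ w ∈ N₁, d i = u - w := by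
    intro i
    obtain ⟨u, hu, w, hw, huw⟩ := Set.mem_vsub.mp (hd_mem i)
    exact ⟨u, hu, w, hw, by rw [← huw, vsub_eq_sub]⟩
  choose u hu w hw hduw using hexists
  -- the matrix with rows d i
  set D : Matrix (Fin g) (Fin g) ℝ := Matrix.of d with hD
  have hDunit : IsUnit D := by
    rw [← Matrix.linearIndependent_rows_iff_isUnit]
    exact hdli
  have hDdet : D.det ≠ 0 := ((Matrix.isUnit_iff_isUnit_det D).mp hDunit).ne_zero
  set c : ℝ → (Fin g → ℝ) := fun t i =>
    (u i ⬝ᵥ B t *ᵥ u i - w i ⬝ᵥ B t *ᵥ w i) / 2 with hc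
  set F : ℝ → (Fin g → ℝ) := fun t =>
    (Matrix.det (D * B t))⁻¹ • ((D * B t).adjugate *ᵥ c t) with hF
  have hdet : ∀ t ∈ Set.Icc (0:ℝ) 1, Matrix.det (D * B t) ≠ 0 := by
    intro t ht
    rw [Matrix.det_mul]
    exact mul_ne_zero hDdet (hpos t ht).det_pos.ne'
  -- α t = F t on (0,1]
  have hαF : ∀ t (ht : t ∈ Set.Ioc (0:ℝ) 1), α t ht = F t := by
    intro t ht
    have htI : t ∈ Set.Icc (0:ℝ) 1 := Set.Ioc_subset_Icc_self ht
    have hsy := hsymm t htI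
    have hrow : ∀ i, d i ⬝ᵥ (B t *ᵥ α t ht) = c t i := by
      intro i
      have hu0 := hNV1 (u i) (hu i)
      have hw0 := hNV1 (w i) (hw i)
      have hu' := hVN t ht (u i) hu0.1 hu0.2
      have hw' := hVN t ht (w i) hw0.1 hw0.2
      have h1 := hu'.2 (w i) hw'.1
      have h2 := hw'.2 (u i) hu'.1
      have heq : (u i - α t ht) ⬝ᵥ B t *ᵥ (u i - α t ht)
          = (w i - α t ht) ⬝ᵥ B t *ᵥ (w i - α t ht) := le_antisymm h1 h2
      rw [sub_quad_eq hsy, sub_quad_eq hsy] at heq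
      have hci : c t i = (u i ⬝ᵥ B t *ᵥ u i - w i ⬝ᵥ B t *ᵥ w i) / 2 := rfl
      rw [hduw i, sub_dotProduct, hci]
      linarith
    have hmat : (D * B t) *ᵥ α t ht = c t := by
      ext i
      rw [← Matrix.mulVec_mulVec]
      exact hrow i
    have hadj : (D * B t).adjugate *ᵥ c t = Matrix.det (D * B t) • α t ht := by
      rw [← hmat, Matrix.mulVec_mulVec, Matrix.adjugate_mul, Matrix.smul_mulVec,
        Matrix.one_mulVec]
    rw [hF]
    simp only
    rw [hadj, smul_smul, inv_mul_cancel₀ (hdet t htI), one_smul]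
  -- continuity of F on [0,1]
  have hFcont : ContinuousOn F (Set.Icc (0:ℝ) 1) := by
    have hG2 : Continuous fun A : Matrix (Fin g) (Fin g) ℝ =>
        (D * A).adjugate *ᵥ (fun i => (u i ⬝ᵥ A *ᵥ u i - w i ⬝ᵥ A *ᵥ w i) / 2) := by
      refine Continuous.matrix_mulVec ?_ ?_
      · exact (continuous_const.matrix_mul continuous_id).matrix_adjugate
      · refine continuous_pi fun i => Continuous.div_const ?_ 2
        exact (continuous_const.dotProduct
            (continuous_id.matrix_mulVec continuous_const)).sub
          (continuous_const.dotProduct (continuous_id.matrix_mulVec continuous_const))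
    have hdetc : ContinuousOn (fun t => Matrix.det (D * B t)) (Set.Icc (0:ℝ) 1) :=
      ((continuous_const.matrix_mul continuous_id).matrix_det).comp_continuousOn hcont
    exact (hdetc.inv₀ hdet).smul (hG2.comp_continuousOn hcont)
  -- the limit cell
  clear_value F c D N₁
  refine ⟨_, ⟨F 0, rfl⟩, ?_⟩
  rw [hσ1]
  apply convexHull_mono
  intro v hv
  refine ⟨(hNV1 v hv).2, fun b hb => ?_⟩
  have hlim : ∀ t ∈ Set.Ioc (0:ℝ) 1,
      0 ≤ (b - F t) ⬝ᵥ B t *ᵥ (b - F t) - (v - F t) ⬝ᵥ B t *ᵥ (v - F t) := by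
    intro t ht
    have hv0 := hNV1 v hv
    have hv' := hVN t ht v hv0.1 hv0.2
    have hle := hv'.2 b hb
    rw [hαF t ht] at hle
    linarith
  have hhc : ContinuousOn (fun t =>
      (b - F t) ⬝ᵥ B t *ᵥ (b - F t) - (v - F t) ⬝ᵥ B t *ᵥ (v - F t)) (Set.Icc (0:ℝ) 1) := by
    have hΦ : Continuous fun p : (Fin g → ℝ) × Matrix (Fin g) (Fin g) ℝ =>
        (b - p.1) ⬝ᵥ p.2 *ᵥ (b - p.1) - (v - p.1) ⬝ᵥ p.2 *ᵥ (v - p.1) := by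
      refine Continuous.sub ?_ ?_
      · exact (continuous_const.sub continuous_fst).dotProduct
          (continuous_snd.matrix_mulVec (continuous_const.sub continuous_fst))
      · exact (continuous_const.sub continuous_fst).dotProduct
          (continuous_snd.matrix_mulVec (continuous_const.sub continuous_fst))
    exact hΦ.comp_continuousOn (hFcont.prodMk hcont)
  have h0 : 0 ≤ (b - F 0) ⬝ᵥ B 0 *ᵥ (b - F 0) - (v - F 0) ⬝ᵥ B 0 *ᵥ (v - F 0) := by
    have hmem0 : (0:ℝ) ∈ closure (Set.Ioc (0:ℝ) 1) := by
      rw [closure_Ioc one_ne_zero.symm]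
      exact ⟨le_refl 0, zero_le_one⟩
    haveI hne : (nhdsWithin (0:ℝ) (Set.Ioc (0:ℝ) 1)).NeBot :=
      mem_closure_iff_nhdsWithin_neBot.mp hmem0
    have htend : Filter.Tendsto (fun t =>
        (b - F t) ⬝ᵥ B t *ᵥ (b - F t) - (v - F t) ⬝ᵥ B t *ᵥ (v - F t))
        (nhdsWithin (0:ℝ) (Set.Ioc (0:ℝ) 1))
        (nhds ((b - F 0) ⬝ᵥ B 0 *ᵥ (b - F 0) - (v - F 0) ⬝ᵥ B 0 *ᵥ (v - F 0))) :=
      (hhc 0 (Set.left_mem_Icc.2 zero_le_one)).mono Set.Ioc_subset_Icc_self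
    exact ge_of_tendsto htend (Filter.eventually_of_mem self_mem_nhdsWithin hlim)
  linarith
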